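/- Let c = μ² + (γ+θ+u₃+u₄+u₅+μ')μ + ((u₂−1)βk₆+γ+u₄+u₅+μ')θ + u₃(γ+u₄+u₅+μ') + βθk₆u₁(δ−1)/μ and R₀ = θβk₆(μ(1−u₂)+(1−δ)u₁)/(k₁k₂μ). Then c > 0 if and only if R₀ < 1, and c < 0 if and only if R₀ > 1. -/

import Mathlib

open Real Filter Polynomial Matrix

theorem stmt8
    (lam lam' mu mu' beta alpha theta gamma phi kappa tau : ℝ)
    (delta u1 u2 u3 u4 u5 : ℝ)
    (hlam : 0 < lam) (hlam' : 0 < lam') (hmu : 0 < mu) (hmu' : 0 < mu')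
    (hbeta : 0 < beta) (halpha : 0 < alpha) (htheta : 0 < theta)
    (hgamma : 0 < gamma) (hphi : 0 < phi) (hkappa : 0 < kappa) (htau : 0 < tau)
    (hdelta : delta ∈ Set.Icc (0:ℝ) 1) (hu1 : u1 ∈ Set.Icc (0:ℝ) 1)
    (hu2 : u2 ∈ Set.Icc (0:ℝ) 1) (hu3 : u3 ∈ Set.Icc (0:ℝ) 1)
    (hu4 : u4 ∈ Set.Icc (0:ℝ) 1) (hu5 : u5 ∈ Set.Icc (0:ℝ) 1)
    (k1 k2 k3 k4 k5 k6 : ℝ)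
    (hk1 : k1 = theta + u3 + mu) (hk2 : k2 = gamma + u4 + u5 + mu + mu')
    (hk3 : k3 = kappa + tau + mu) (hk4 : k4 = phi + mu + mu') (hk5 : k5 = mu + alpha)
    (hk6 : k6 = lam / (u1 + mu) + alpha * lam' * kappa / ((u1 + mu) * k3 * k5)
      + alpha * lam' * phi * tau / ((u1 + mu) * k3 * k4 * k5))
    (c R0 : ℝ)
    (hc : c = mu ^ 2 + (gamma + theta + u3 + u4 + u5 + mu') * mu
      + ((u2 - 1) * beta * k6 + gamma + u4 + u5 + mu') * theta
      + u3 * (gamma + u4 + u5 + mu') + beta * theta * k6 * u1 * (delta - 1) / mu)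
    (hR0 : R0 = theta * beta * k6 * (mu * (1 - u2) + (1 - delta) * u1) / (k1 * k2 * mu)) :
    (0 < c ↔ R0 < 1) ∧ (c < 0 ↔ 1 < R0) := by
  have hu3' := hu3.1
  have hu4' := hu4.1
  have hu5' := hu5.1
  have h12 : 0 < k1 * k2 := by
    subst hk1 hk2; positivity
  have hmu0 : mu ≠ 0 := ne_of_gt hmu
  have hA : c * mu = k1 * k2 * mu
      - theta * beta * k6 * (mu * (1 - u2) + (1 - delta) * u1) := by
    rw [hc, hk1, hk2]; field_simp; ring
  have hB : R0 * (k1 * k2 * mu) = theta * beta * k6 * (mu * (1 - u2) + (1 - delta) * u1) := by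
    rw [hR0]; field_simp; rw [mul_assoc]; exact mul_div_cancel_right₀ _ h12.ne'
  have hce : c = k1 * k2 * (1 - R0) := by
    have h : c * mu = k1 * k2 * (1 - R0) * mu := by rw [hA, ← hB]; ring
    exact mul_right_cancel₀ hmu0 h
  rw [hce]
  constructor
  · rw [mul_pos_iff_of_pos_left h12, sub_pos]
  · constructor
    · intro h
      by_contra hn
      push_neg at hn
      have : 0 ≤ k1 * k2 * (1 - R0) := mul_nonneg h12.le (by linarith)
      linarith
    · intro h
      exact mul_neg_of_pos_of_neg h12 (by linarith)
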